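/- For any sequence of real numbers y₀, …, y_{n−1} with 0 ≤ y_k ≤ Y_k where Y_k := max{1, Σ_{i<k} y_i}, one has Σ_{k=0}^{n−1} y_k/√(Y_k) ≤ (√2 + 1)·√(Y_n). -/

import Mathlib

open Finset

lemma aux_sum_div_sqrt (n : ℕ) (y : ℕ → ℝ)
    (h : ∀ k < n, 0 ≤ y k ∧ y k ≤ max 1 (∑ i ∈ Finset.range k, y i)) :
    ∑ k ∈ Finset.range n, y k / Real.sqrt (max 1 (∑ i ∈ Finset.range k, y i)) ≤
      Real.sqrt 2 * Real.sqrt (max 1 (∑ i ∈ Finset.range n, y i)) +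
        (∑ i ∈ Finset.range n, y i) / Real.sqrt (max 1 (∑ i ∈ Finset.range n, y i)) := by
  induction n with
  | zero => simp
  | succ n ih =>
    have h' : ∀ k < n, 0 ≤ y k ∧ y k ≤ max 1 (∑ i ∈ Finset.range k, y i) :=
      fun k hk => h k (Nat.lt_succ_of_lt hk)
    have ih' := ih h'
    set S : ℝ := ∑ i ∈ Finset.range n, y i with hS
    obtain ⟨hy0, hyY⟩ := h n (Nat.lt_succ_self n)
    have hS0 : 0 ≤ S := Finset.sum_nonneg fun i hi => (h' i (Finset.mem_range.mp hi)).1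
    set Y : ℝ := max 1 S with hY
    have hY1 : (1:ℝ) ≤ Y := le_max_left _ _
    have hY0 : (0:ℝ) < Y := lt_of_lt_of_le one_pos hY1
    have hSY : S ≤ Y := le_max_right _ _
    have hsqY : (1:ℝ) ≤ Real.sqrt Y := Real.one_le_sqrt.mpr hY1
    have hsqY0 : (0:ℝ) < Real.sqrt Y := lt_of_lt_of_le one_pos hsqY
    set s : ℝ := S + y n with hs
    have hsum : ∑ i ∈ Finset.range (n+1), y i = s := by
      rw [Finset.sum_range_succ]
    rw [Finset.sum_range_succ, hsum]
    have step1 : ∑ k ∈ Finset.range n, y k / Real.sqrt (max 1 (∑ i ∈ Finset.range k, y i))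
        + y n / Real.sqrt Y ≤ Real.sqrt 2 * Real.sqrt Y + s / Real.sqrt Y := by
      have := add_le_add ih' (le_refl (y n / Real.sqrt Y))
      calc _ ≤ Real.sqrt 2 * Real.sqrt Y + S / Real.sqrt Y + y n / Real.sqrt Y := this
        _ = Real.sqrt 2 * Real.sqrt Y + s / Real.sqrt Y := by rw [hs]; ring
    refine step1.trans ?_
    rcases le_or_gt s 1 with hs1 | hs1
    · -- then S ≤ 1 so Y = 1 and max 1 s = 1
      have hYeq : Y = 1 := max_eq_left (le_trans (by linarith) le_rfl : S ≤ 1)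
      have hmax : max 1 s = 1 := max_eq_left hs1
      rw [hmax, hYeq]
    · -- s > 1, so max 1 s = s
      have hmax : max 1 s = s := max_eq_right hs1.le
      rw [hmax]
      have hs0 : (0:ℝ) < s := lt_trans one_pos hs1
      have hYs : Y ≤ s := by
        rcases max_cases 1 S with ⟨h1, _⟩ | ⟨h1, _⟩ <;> rw [hY, h1] <;> linarith
      have hs2Y : s ≤ 2 * Y := by linarith
      set a : ℝ := Real.sqrt Y with ha
      set b : ℝ := Real.sqrt s with hb
      have hb0 : (0:ℝ) < b := Real.sqrt_pos.mpr hs0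
      have hab : a ≤ b := Real.sqrt_le_sqrt hYs
      have hba : b ≤ Real.sqrt 2 * a := by
        calc b ≤ Real.sqrt (2 * Y) := Real.sqrt_le_sqrt hs2Y
          _ = Real.sqrt 2 * a := by rw [ha, Real.sqrt_mul (by norm_num)]
      have ha2 : a ^ 2 = Y := Real.sq_sqrt hY0.le
      have hb2 : b ^ 2 = s := Real.sq_sqrt hs0.le
      have hsb : s / b = b := by rw [← hb2]; field_simp
      have hsa : s / a = b ^ 2 / a := by rw [hb2]
      rw [hsb, hsa]
      have key : (0:ℝ) ≤ (b - a) * (Real.sqrt 2 * a - b) :=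
        mul_nonneg (by linarith) (by linarith)
      rw [← sub_nonneg]
      have heq : Real.sqrt 2 * b + b - (Real.sqrt 2 * a + b ^ 2 / a)
          = ((b - a) * (Real.sqrt 2 * a - b)) / a := by
        field_simp; ring
      rw [heq]
      exact div_nonneg key hsqY0.le

/-- Lemma 19 of Jaksch et al.: for `0 ≤ y_k ≤ Y_k` with `Y_k = max {1, ∑_{i<k} y_i}`,
`∑_{k<n} y_k / √(Y_k) ≤ (√2 + 1) √(Y_n)`. -/
theorem sum_div_sqrt_le (n : ℕ) (y : ℕ → ℝ)
    (h : ∀ k < n, 0 ≤ y k ∧ y k ≤ max 1 (∑ i ∈ Finset.range k, y i)) :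
    ∑ k ∈ Finset.range n, y k / Real.sqrt (max 1 (∑ i ∈ Finset.range k, y i)) ≤
      (Real.sqrt 2 + 1) * Real.sqrt (max 1 (∑ i ∈ Finset.range n, y i)) := by
  refine (aux_sum_div_sqrt n y h).trans ?_
  set S : ℝ := ∑ i ∈ Finset.range n, y i with hS
  set Y : ℝ := max 1 S with hY
  have hY1 : (1:ℝ) ≤ Y := le_max_left _ _
  have hSY : S ≤ Y := le_max_right _ _
  have hsqY : (1:ℝ) ≤ Real.sqrt Y := Real.one_le_sqrt.mpr hY1
  have hsqY0 : (0:ℝ) < Real.sqrt Y := lt_of_lt_of_le one_pos hsqY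
  have : S / Real.sqrt Y ≤ Real.sqrt Y := by
    rw [div_le_iff₀ hsqY0, Real.mul_self_sqrt (by linarith : (0:ℝ) ≤ Y)]
    exact hSY
  nlinarith [this]
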